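/- For b ∈ (0, π/2) and k² = sin²b/(1 + cos²b), the identity I₂(b) = 2·√(2/(1+k²))·(E(k) − ((1−k²)/2)·K(k)) holds, where I₂(b) = ∫_{−1}^{1} (1 − x² sin²b) / (√(1−x²)·√(1 + cos²b − x² sin²b)) dx. -/

import Mathlib

open Real Set intervalIntegral
open MeasureTheory

lemma aux_int_base : IntervalIntegrable (fun x : ℝ => 1 / Real.sqrt (1 - x ^ 2)) volume 0 1 := by
  have h1 : IntervalIntegrable (fun x : ℝ => (1 - x) ^ (-(1/2) : ℝ)) volume 0 1 := by
    have := (intervalIntegral.intervalIntegrable_rpow' (a := 0) (b := 1) (r := -(1/2))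
      (by norm_num)).comp_sub_left 1
    simpa using this.symm
  refine h1.mono_fun ?_ ?_
  · exact (measurable_const.div
      ((measurable_const.sub (measurable_id.pow_const 2)).sqrt)).aestronglyMeasurable
  · filter_upwards [MeasureTheory.ae_restrict_mem measurableSet_uIoc] with x hx
    rw [Set.uIoc_of_le (by norm_num : (0:ℝ) ≤ 1)] at hx
    obtain ⟨hx0, hx1⟩ := hx
    simp only [Real.norm_eq_abs]
    rw [abs_of_nonneg (by positivity), abs_of_nonneg (Real.rpow_nonneg (by linarith) _)]
    rcases eq_or_lt_of_le hx1 with h | h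
    · subst h; simp [Real.zero_rpow]
    · have h1x : 0 < 1 - x := by linarith
      have h1x2 : 0 < 1 - x ^ 2 := by nlinarith
      rw [Real.rpow_neg h1x.le, ← Real.sqrt_eq_rpow, one_div,
        inv_le_inv₀ (Real.sqrt_pos.mpr h1x2) (Real.sqrt_pos.mpr h1x)]
      apply Real.sqrt_le_sqrt; nlinarith

lemma aux_int_E (k : ℝ) : IntervalIntegrable
    (fun x : ℝ => Real.sqrt (1 - k ^ 2 * x ^ 2) / Real.sqrt (1 - x ^ 2)) volume 0 1 := by
  refine aux_int_base.mono_fun ?_ ?_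
  · exact (((measurable_const.sub (measurable_const.mul
      (measurable_id.pow_const 2))).sqrt).div
      ((measurable_const.sub (measurable_id.pow_const 2)).sqrt)).aestronglyMeasurable
  · filter_upwards with x
    simp only [Real.norm_eq_abs]
    rw [abs_of_nonneg (by positivity), abs_of_nonneg (by positivity)]
    rcases eq_or_lt_of_le (Real.sqrt_nonneg (1 - x ^ 2)) with h | h
    · rw [← h]; simp
    · rw [div_le_div_iff_of_pos_right h]
      exact Real.sqrt_le_one.mpr (by nlinarith [sq_nonneg (k * x), mul_pow k x 2])

lemma aux_int_K (k : ℝ) (hk : k ∈ Set.Ioo (0:ℝ) 1) : IntervalIntegrable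
    (fun x : ℝ => 1 / (Real.sqrt (1 - x ^ 2) * Real.sqrt (1 - k ^ 2 * x ^ 2))) volume 0 1 := by
  have c := (Real.sqrt (1 - k ^ 2))⁻¹
  refine ((aux_int_base.const_mul ((Real.sqrt (1 - k ^ 2))⁻¹))).mono_fun ?_ ?_
  · exact (measurable_const.div (((measurable_const.sub (measurable_id.pow_const 2)).sqrt).mul
      ((measurable_const.sub (measurable_const.mul (measurable_id.pow_const 2))).sqrt))).aestronglyMeasurable
  · filter_upwards [MeasureTheory.ae_restrict_mem measurableSet_uIoc] with x hx
    rw [Set.uIoc_of_le (by norm_num : (0:ℝ) ≤ 1)] at hx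
    obtain ⟨hx0, hx1⟩ := hx
    have hkk : 0 < 1 - k ^ 2 := by nlinarith [hk.1, hk.2]
    have hx2 : x ^ 2 ≤ 1 := by nlinarith
    have hs : Real.sqrt (1 - k ^ 2) ≤ Real.sqrt (1 - k ^ 2 * x ^ 2) := by
      apply Real.sqrt_le_sqrt
      nlinarith [mul_le_mul_of_nonneg_left hx2 (sq_nonneg k)]
    have hs0 : 0 < Real.sqrt (1 - k ^ 2) := Real.sqrt_pos.mpr hkk
    simp only [Real.norm_eq_abs]
    rw [abs_of_nonneg (by positivity), abs_of_nonneg (by positivity)]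
    rcases eq_or_lt_of_le (Real.sqrt_nonneg (1 - x ^ 2)) with h | h
    · rw [← h]; simp
    · rw [one_div, mul_inv, one_div, mul_comm]
      gcongr

lemma aux_pointwise (A k x : ℝ) (hA : 1 ≤ A) (hk : k ∈ Set.Ioo (0:ℝ) 1) :
    (1 - x ^ 2 * (A * k ^ 2)) /
      (Real.sqrt (1 - x ^ 2) * Real.sqrt (A - x ^ 2 * (A * k ^ 2))) =
    Real.sqrt A * (Real.sqrt (1 - k ^ 2 * x ^ 2) / Real.sqrt (1 - x ^ 2)) +
      ((1 - A) / Real.sqrt A) *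
        (1 / (Real.sqrt (1 - x ^ 2) * Real.sqrt (1 - k ^ 2 * x ^ 2))) := by
  have hA0 : (0:ℝ) < A := lt_of_lt_of_le one_pos hA
  by_cases hD : Real.sqrt (1 - x ^ 2) = 0
  · simp [hD]
  · have hx2 : x ^ 2 < 1 := by
      by_contra h
      push_neg at h
      exact hD (Real.sqrt_eq_zero'.mpr (by linarith))
    have hu : (0:ℝ) < 1 - k ^ 2 * x ^ 2 := by nlinarith [hk.1, hk.2, sq_nonneg x, sq_nonneg k]
    have hfac : A - x ^ 2 * (A * k ^ 2) = A * (1 - k ^ 2 * x ^ 2) := by ring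
    rw [hfac, Real.sqrt_mul hA0.le]
    have ha2 : Real.sqrt A ^ 2 = A := Real.sq_sqrt hA0.le
    have hu2 : Real.sqrt (1 - k ^ 2 * x ^ 2) ^ 2 = 1 - k ^ 2 * x ^ 2 := Real.sq_sqrt hu.le
    have ha0 : 0 < Real.sqrt A := Real.sqrt_pos.mpr hA0
    have hu0 : 0 < Real.sqrt (1 - k ^ 2 * x ^ 2) := Real.sqrt_pos.mpr hu
    have hd0 : 0 < Real.sqrt (1 - x ^ 2) :=
      lt_of_le_of_ne (Real.sqrt_nonneg _) (Ne.symm hD)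
    generalize Real.sqrt (1 - k ^ 2 * x ^ 2) = u at *
    generalize Real.sqrt A = a at *
    generalize Real.sqrt (1 - x ^ 2) = d at *
    field_simp
    linear_combination (-u ^ 2) * ha2 + (-A) * hu2

/-- Complete elliptic integral of the first kind. -/
noncomputable def ellK (k : ℝ) : ℝ :=
  ∫ x in (0 : ℝ)..1, 1 / (Real.sqrt (1 - x ^ 2) * Real.sqrt (1 - k ^ 2 * x ^ 2))

/-- Complete elliptic integral of the second kind. -/
noncomputable def ellE (k : ℝ) : ℝ :=
  ∫ x in (0 : ℝ)..1, Real.sqrt (1 - k ^ 2 * x ^ 2) / Real.sqrt (1 - x ^ 2)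

/-- For `b ∈ (0, π/2)` and `k ∈ (0,1)` with `k² = sin²b/(1 + cos²b)`,
`I₂(b) = 2 √(2/(1+k²)) (E(k) − ((1−k²)/2) K(k))`. -/
theorem I2_elliptic (b k : ℝ) (hb : b ∈ Ioo 0 (π / 2)) (hk : k ∈ Ioo (0 : ℝ) 1)
    (hk2 : k ^ 2 = Real.sin b ^ 2 / (1 + Real.cos b ^ 2)) :
    (∫ x in (-1 : ℝ)..1, (1 - x ^ 2 * Real.sin b ^ 2) /
        (Real.sqrt (1 - x ^ 2) *
          Real.sqrt (1 + Real.cos b ^ 2 - x ^ 2 * Real.sin b ^ 2))) =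
    2 * Real.sqrt (2 / (1 + k ^ 2)) * (ellE k - (1 - k ^ 2) / 2 * ellK k) := by
  set A : ℝ := 1 + Real.cos b ^ 2 with hAdef
  have hA0 : (0:ℝ) < A := by positivity
  have hA1 : (1:ℝ) ≤ A := by nlinarith [sq_nonneg (Real.cos b)]
  have hs : Real.sin b ^ 2 = A * k ^ 2 := by rw [hk2]; field_simp
  have h2 : A * (1 + k ^ 2) = 2 := by
    have hpyth := Real.sin_sq_add_cos_sq b
    linear_combination hpyth - hs
  have hA2 : (2:ℝ) / (1 + k ^ 2) = A := by
    field_simp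
    linarith [h2]
  set G : ℝ → ℝ := fun x => Real.sqrt A * (Real.sqrt (1 - k ^ 2 * x ^ 2) / Real.sqrt (1 - x ^ 2)) +
      ((1 - A) / Real.sqrt A) *
        (1 / (Real.sqrt (1 - x ^ 2) * Real.sqrt (1 - k ^ 2 * x ^ 2))) with hGdef
  have hpt : ∀ x : ℝ, (1 - x ^ 2 * Real.sin b ^ 2) /
        (Real.sqrt (1 - x ^ 2) *
          Real.sqrt (1 + Real.cos b ^ 2 - x ^ 2 * Real.sin b ^ 2)) = G x := by
    intro x
    rw [hs, ← hAdef]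
    exact aux_pointwise A k x hA1 hk
  have hG01 : IntervalIntegrable G MeasureTheory.volume 0 1 :=
    ((aux_int_E k).const_mul _).add ((aux_int_K k hk).const_mul _)
  have hGeven : ∀ x : ℝ, G (-x) = G x := by
    intro x
    have hxx : (-x) ^ 2 = x ^ 2 := by ring
    simp only [hGdef, hxx]
  have hGm0 : IntervalIntegrable G MeasureTheory.volume (-1) 0 := by
    have h := (IntervalIntegrable.iff_comp_neg (f := G)).mp hG01
    simp only [neg_zero] at h
    have : (fun x => G (-x)) = G := funext hGeven
    rw [this] at h
    exact h.symm
  rw [intervalIntegral.integral_congr (g := G) (fun x _ => hpt x),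
    ← intervalIntegral.integral_add_adjacent_intervals hGm0 hG01]
  have hneg : (∫ x in (-1:ℝ)..0, G x) = ∫ x in (0:ℝ)..1, G x := by
    have h := intervalIntegral.integral_comp_neg G (a := 0) (b := 1)
    simp only [neg_zero] at h
    rw [← h]
    exact intervalIntegral.integral_congr (fun x _ => hGeven x)
  have hval : (∫ x in (0:ℝ)..1, G x) =
      Real.sqrt A * ellE k + ((1 - A) / Real.sqrt A) * ellK k := by
    rw [hGdef]
    rw [intervalIntegral.integral_add ((aux_int_E k).const_mul _) ((aux_int_K k hk).const_mul _),
      intervalIntegral.integral_const_mul, intervalIntegral.integral_const_mul]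
    rfl
  have ha2 : Real.sqrt A ^ 2 = A := Real.sq_sqrt hA0.le
  have ha0 : 0 < Real.sqrt A := Real.sqrt_pos.mpr hA0
  have key : (1 - A) / Real.sqrt A = -(Real.sqrt A * ((1 - k ^ 2) / 2)) := by
    rw [div_eq_iff (ne_of_gt ha0)]
    linear_combination ((1 - k ^ 2) / 2) * ha2 + (-(1:ℝ) / 2) * h2
  rw [hneg, hval, hA2, key]
  ring
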